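/- Let σ > 0, τ⁻¹ as above with τ⁻¹(u) ≥ u, and define g(t,s) := −𝟙_{t<τ⁻¹(s)} σ²/(1+σ²(1+s−τ⁻¹(s))) on [0,1]². Set g̃(s,u) := g(s,u) − ∫₀ᵘ g(s,v) g(u,v) dv for 0 ≤ u ≤ s ≤ 1. Then ∫₀¹∫₀ˢ (σ²/(1+σ²)) g̃(s,u) du ds = −∫₀¹ σ⁴(τ⁻¹(u)−u) / ((1+σ²)(1+σ²(1+u−τ⁻¹(u)))) du − (1/2)(σ²/(1+σ²)) ∫₀¹ (σ²(τ⁻¹(v)−v)/(1+σ²(1+v−τ⁻¹(v))))² dv. -/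

import Mathlib

open MeasureTheory

/-- The explicit kernel `g(t,s) = −𝟙_{t<τ⁻¹(s)} σ²/(1+σ²(1+s−τ⁻¹(s)))`. -/
noncomputable def gker (σ : ℝ) (τinv : ℝ → ℝ) (t s : ℝ) : ℝ :=
  if t < τinv s then -(σ ^ 2 / (1 + σ ^ 2 * (1 + s - τinv s))) else 0

section Aux

open Set

/-- The scalar factor `c(u) = σ²/(1+σ²(1+u−τ⁻¹(u)))`. -/
noncomputable def cfun (σ : ℝ) (τinv : ℝ → ℝ) (u : ℝ) : ℝ :=
  σ ^ 2 / (1 + σ ^ 2 * (1 + u - τinv u))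

lemma gker_eq (σ : ℝ) (τinv : ℝ → ℝ) (t s : ℝ) :
    gker σ τinv t s = if t < τinv s then -cfun σ τinv s else 0 := rfl

/-- The simplified inner integral, as a measurable function of both variables. -/
noncomputable def Psi (σ : ℝ) (τinv : ℝ → ℝ) (s u : ℝ) : ℝ :=
  ∫ v in Icc (0:ℝ) 1, (if v ≤ u ∧ s < τinv v then (cfun σ τinv v) ^ 2 else 0)

/-- Bounded measurable functions are integrable on finite-measure sets. -/
lemma bdd_meas_integrableOn {f : ℝ → ℝ} {S : Set ℝ} (hSm : MeasurableSet S)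
    (hS : volume S < ⊤) (hmeas : AEStronglyMeasurable f (volume.restrict S))
    {M : ℝ} (hM : ∀ x ∈ S, |f x| ≤ M) : IntegrableOn f S := by
  refine Integrable.mono' (g := fun _ => M) ((integrableOn_const_iff (C := M)).mpr (Or.inr hS)) hmeas ?_
  filter_upwards [ae_restrict_mem hSm] with x hx
  simpa [Real.norm_eq_abs] using hM x hx

/-- Fubini on the triangle `{0 ≤ u ≤ s ≤ b}`. -/
lemma tri_swap {b : ℝ} (hb : 0 ≤ b) (F : ℝ → ℝ → ℝ)
    (hF : Measurable (Function.uncurry F)) {M : ℝ}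
    (hM : ∀ s ∈ Icc 0 b, ∀ u ∈ Icc 0 b, |F s u| ≤ M) :
    ∫ s in Icc (0:ℝ) b, ∫ u in Icc (0:ℝ) s, F s u
      = ∫ u in Icc (0:ℝ) b, ∫ s in Icc u b, F s u := by
  set G : ℝ → ℝ → ℝ := fun s u => if 0 ≤ u ∧ u ≤ s then F s u else 0 with hG
  have hGm : Measurable (Function.uncurry G) := by
    have : Function.uncurry G =
        fun p : ℝ × ℝ => if 0 ≤ p.2 ∧ p.2 ≤ p.1 then Function.uncurry F p else 0 := rfl
    rw [this]
    exact Measurable.ite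
      ((measurableSet_le measurable_const measurable_snd).inter
        (measurableSet_le measurable_snd measurable_fst)) hF measurable_const
  have step1 : ∀ s ∈ Icc (0:ℝ) b, ∫ u in Icc (0:ℝ) s, F s u = ∫ u in Icc (0:ℝ) b, G s u := by
    intro s hs
    have h1 : ∀ u, G s u = (Icc (0:ℝ) s).indicator (F s) u := by
      intro u
      simp only [hG, Set.indicator, mem_Icc]
    calc ∫ u in Icc (0:ℝ) s, F s u
        = ∫ u in Icc (0:ℝ) b ∩ Icc (0:ℝ) s, F s u := by
          rw [inter_eq_self_of_subset_right (Icc_subset_Icc_right hs.2)]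
      _ = ∫ u in Icc (0:ℝ) b, (Icc (0:ℝ) s).indicator (F s) u :=
          (setIntegral_indicator measurableSet_Icc).symm
      _ = ∫ u in Icc (0:ℝ) b, G s u := by simp_rw [h1]
  have hint : Integrable (Function.uncurry G)
      ((volume.restrict (Icc (0:ℝ) b)).prod (volume.restrict (Icc (0:ℝ) b))) := by
    rw [Measure.prod_restrict]
    refine Integrable.mono' (g := fun _ => |M|)
      ((integrableOn_const_iff (C := |M|)).mpr (Or.inr ?_)) hGm.aestronglyMeasurable ?_
    · rw [Measure.prod_prod, Real.volume_Icc]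
      exact ENNReal.mul_lt_top ENNReal.ofReal_lt_top ENNReal.ofReal_lt_top
    · filter_upwards [ae_restrict_mem (measurableSet_Icc.prod measurableSet_Icc)] with p hp
      rcases hp with ⟨hp1, hp2⟩
      rw [Real.norm_eq_abs]
      by_cases h : 0 ≤ p.2 ∧ p.2 ≤ p.1
      · calc |Function.uncurry G p| = |F p.1 p.2| := by
              simp only [Function.uncurry, hG, if_pos h]
          _ ≤ M := hM p.1 hp1 p.2 hp2
          _ ≤ |M| := le_abs_self M
      · simp only [Function.uncurry, hG, if_neg h, abs_zero]
        exact abs_nonneg M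
  have swap := integral_integral_swap hint
  have step2 : ∀ u ∈ Icc (0:ℝ) b, ∫ s in Icc (0:ℝ) b, G s u = ∫ s in Icc u b, F s u := by
    intro u hu
    have h1 : ∀ s, G s u = (Ici u).indicator (fun s => F s u) s := by
      intro s
      simp only [hG, Set.indicator, mem_Ici]
      by_cases h : u ≤ s
      · rw [if_pos ⟨hu.1, h⟩, if_pos h]
      · rw [if_neg (fun hh => h hh.2), if_neg h]
    have h2 : Icc (0:ℝ) b ∩ Ici u = Icc u b := by
      ext x
      simp only [mem_inter_iff, mem_Icc, mem_Ici]
      constructor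
      · rintro ⟨⟨_, hxb⟩, hux⟩; exact ⟨hux, hxb⟩
      · rintro ⟨hux, hxb⟩; exact ⟨⟨hu.1.trans hux, hxb⟩, hux⟩
    calc ∫ s in Icc (0:ℝ) b, G s u
        = ∫ s in Icc (0:ℝ) b, (Ici u).indicator (fun s => F s u) s := by simp_rw [h1]
      _ = ∫ s in Icc (0:ℝ) b ∩ Ici u, F s u := setIntegral_indicator measurableSet_Ici
      _ = ∫ s in Icc u b, F s u := by rw [h2]
  calc ∫ s in Icc (0:ℝ) b, ∫ u in Icc (0:ℝ) s, F s u
      = ∫ s in Icc (0:ℝ) b, ∫ u in Icc (0:ℝ) b, G s u :=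
        setIntegral_congr_fun measurableSet_Icc (fun s hs => step1 s hs)
    _ = ∫ u in Icc (0:ℝ) b, ∫ s in Icc (0:ℝ) b, G s u := swap
    _ = ∫ u in Icc (0:ℝ) b, ∫ s in Icc u b, F s u :=
        setIntegral_congr_fun measurableSet_Icc (fun u hu => step2 u hu)

/-- Integrability (in the outer variable) of the inner integral over the triangle. -/
lemma inner_integrable {b : ℝ} (hb : 0 ≤ b) (F : ℝ → ℝ → ℝ)
    (hF : Measurable (Function.uncurry F)) {M : ℝ}
    (hM : ∀ s ∈ Icc 0 b, ∀ u ∈ Icc 0 b, |F s u| ≤ M) :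
    IntegrableOn (fun s => ∫ u in Icc (0:ℝ) s, F s u) (Icc (0:ℝ) b) := by
  set G : ℝ → ℝ → ℝ := fun s u => if 0 ≤ u ∧ u ≤ s then F s u else 0 with hG
  have hGm : Measurable (Function.uncurry G) := by
    have : Function.uncurry G =
        fun p : ℝ × ℝ => if 0 ≤ p.2 ∧ p.2 ≤ p.1 then Function.uncurry F p else 0 := rfl
    rw [this]
    exact Measurable.ite
      ((measurableSet_le measurable_const measurable_snd).inter
        (measurableSet_le measurable_snd measurable_fst)) hF measurable_const
  have step1 : ∀ s ∈ Icc (0:ℝ) b, ∫ u in Icc (0:ℝ) s, F s u = ∫ u in Icc (0:ℝ) b, G s u := by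
    intro s hs
    have h1 : ∀ u, G s u = (Icc (0:ℝ) s).indicator (F s) u := by
      intro u
      simp only [hG, Set.indicator, mem_Icc]
    calc ∫ u in Icc (0:ℝ) s, F s u
        = ∫ u in Icc (0:ℝ) b ∩ Icc (0:ℝ) s, F s u := by
          rw [inter_eq_self_of_subset_right (Icc_subset_Icc_right hs.2)]
      _ = ∫ u in Icc (0:ℝ) b, (Icc (0:ℝ) s).indicator (F s) u :=
          (setIntegral_indicator measurableSet_Icc).symm
      _ = ∫ u in Icc (0:ℝ) b, G s u := by simp_rw [h1]
  have hM0 : 0 ≤ M := (abs_nonneg _).trans (hM 0 (by simp [hb]) 0 (by simp [hb]))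
  have hXm : StronglyMeasurable (fun s => ∫ u in Icc (0:ℝ) b, G s u) :=
    StronglyMeasurable.integral_prod_right hGm.stronglyMeasurable
  refine bdd_meas_integrableOn measurableSet_Icc
    (by rw [Real.volume_Icc]; exact ENNReal.ofReal_lt_top)
    (hXm.aestronglyMeasurable.congr ?_) (M := M * b) ?_
  · filter_upwards [ae_restrict_mem measurableSet_Icc] with s hs
    exact (step1 s hs).symm
  · intro s hs
    have h2 : ∀ u ∈ Icc (0:ℝ) s, ‖F s u‖ ≤ M := by
      intro u hu
      rw [Real.norm_eq_abs]
      exact hM s hs u ⟨hu.1, hu.2.trans hs.2⟩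
    have h3 := norm_setIntegral_le_of_norm_le_const (μ := volume) (s := Icc (0:ℝ) s)
      (by rw [Real.volume_Icc]; exact ENNReal.ofReal_lt_top) h2
    rw [Real.norm_eq_abs] at h3
    calc |∫ u in Icc (0:ℝ) s, F s u| ≤ M * (volume (Icc (0:ℝ) s)).toReal := h3
      _ ≤ M * b := by
          rw [Real.volume_Icc, ENNReal.toReal_ofReal (by simpa using hs.1)]
          have := hs.2
          nlinarith

end Aux

/-- Computation of `∫₀¹∫₀ˢ f(s,u) g̃(s,u) du ds` in the computational example
with `f ≡ σ²/(1+σ²)` and `g̃(s,u) = g(s,u) − ∫₀ᵘ g(s,v)g(u,v) dv`. -/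
theorem f_gtilde_double_integral
    (σ : ℝ) (hσ : 0 < σ) (τinv : ℝ → ℝ) (hmono : Monotone τinv)
    (hτ1 : ∀ u : ℝ, u ≤ τinv u) (hτ2 : ∀ u ∈ Set.Icc (0:ℝ) 1, τinv u ≤ 1) :
    ∫ s in Set.Icc (0:ℝ) 1, ∫ u in Set.Icc (0:ℝ) s,
        (σ ^ 2 / (1 + σ ^ 2)) *
          (gker σ τinv s u - ∫ v in Set.Icc (0:ℝ) u, gker σ τinv s v * gker σ τinv u v)
      = -(∫ u in Set.Icc (0:ℝ) 1,
            σ ^ 4 * (τinv u - u) /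
              ((1 + σ ^ 2) * (1 + σ ^ 2 * (1 + u - τinv u))))
        - (1 / 2) * (σ ^ 2 / (1 + σ ^ 2)) *
            ∫ v in Set.Icc (0:ℝ) 1,
              (σ ^ 2 * (τinv v - v) / (1 + σ ^ 2 * (1 + v - τinv v))) ^ 2 := by
  have hτm : Measurable τinv := hmono.measurable
  have hcm : Measurable (cfun σ τinv) :=
    measurable_const.div
      (measurable_const.add (measurable_const.mul
        ((measurable_const.add measurable_id).sub hτm)))
  have hgm : Measurable (Function.uncurry (gker σ τinv)) := by
    have h : Function.uncurry (gker σ τinv) =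
        fun p : ℝ × ℝ => if p.1 < τinv p.2 then -cfun σ τinv p.2 else 0 := rfl
    rw [h]
    exact Measurable.ite (measurableSet_lt measurable_fst (hτm.comp measurable_snd))
      ((hcm.comp measurable_snd).neg) measurable_const
  have hden : ∀ u ∈ Set.Icc (0:ℝ) 1, 1 ≤ 1 + σ ^ 2 * (1 + u - τinv u) := by
    intro u hu
    nlinarith [mul_nonneg (sq_nonneg σ) (by linarith [hτ2 u hu, hu.1] : (0:ℝ) ≤ 1 + u - τinv u)]
  have hc_nonneg : ∀ u ∈ Set.Icc (0:ℝ) 1, 0 ≤ cfun σ τinv u := fun u hu =>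
    div_nonneg (sq_nonneg σ) (by linarith [hden u hu])
  have hc_le : ∀ u ∈ Set.Icc (0:ℝ) 1, cfun σ τinv u ≤ σ ^ 2 := fun u hu =>
    div_le_self (sq_nonneg σ) (hden u hu)
  have hgbd : ∀ s u, u ∈ Set.Icc (0:ℝ) 1 → |gker σ τinv s u| ≤ σ ^ 2 := by
    intro s u hu
    rw [gker_eq]
    split
    · rw [abs_neg, abs_of_nonneg (hc_nonneg u hu)]; exact hc_le u hu
    · simpa using sq_nonneg σ
  have hPsibd : ∀ s u, |Psi σ τinv s u| ≤ σ ^ 4 := by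
    intro s u
    have h2 : ∀ v ∈ Set.Icc (0:ℝ) 1,
        ‖(if v ≤ u ∧ s < τinv v then (cfun σ τinv v) ^ 2 else 0)‖ ≤ σ ^ 4 := by
      intro v hv
      rw [Real.norm_eq_abs]
      split
      · rw [abs_of_nonneg (sq_nonneg _)]
        nlinarith [hc_le v hv, hc_nonneg v hv]
      · simpa using by positivity
    have hmeas : AEStronglyMeasurable
        (fun v => if v ≤ u ∧ s < τinv v then (cfun σ τinv v) ^ 2 else 0)
        (volume.restrict (Set.Icc (0:ℝ) 1)) := by
      refine (Measurable.ite ?_ (hcm.pow_const 2) measurable_const).aestronglyMeasurable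
      exact (measurableSet_le measurable_id measurable_const).inter (hτm measurableSet_Ioi)
    have h3 := norm_setIntegral_le_of_norm_le_const (μ := volume) (s := Set.Icc (0:ℝ) 1)
      (by rw [Real.volume_Icc]; exact ENNReal.ofReal_lt_top) h2
    calc |Psi σ τinv s u| ≤ σ ^ 4 * (volume (Set.Icc (0:ℝ) 1)).toReal := by
          simpa [Real.norm_eq_abs, Psi] using h3
      _ = σ ^ 4 := by rw [Real.volume_Icc]; norm_num
  have hPsim : StronglyMeasurable (Function.uncurry (Psi σ τinv)) := by
    have h : StronglyMeasurable (Function.uncurry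
        (fun (p : ℝ × ℝ) (v : ℝ) =>
          if v ≤ p.2 ∧ p.1 < τinv v then (cfun σ τinv v) ^ 2 else 0)) := by
      refine (Measurable.ite ?_ ((hcm.comp measurable_snd).pow_const 2)
        measurable_const).stronglyMeasurable
      exact (measurableSet_le measurable_snd (measurable_snd.comp measurable_fst)).inter
        (measurableSet_lt (measurable_fst.comp measurable_fst) (hτm.comp measurable_snd))
    exact StronglyMeasurable.integral_prod_right
      (f := fun (p : ℝ × ℝ) (v : ℝ) =>
        if v ≤ p.2 ∧ p.1 < τinv v then (cfun σ τinv v) ^ 2 else 0) h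
  set φ : ℝ → ℝ → ℝ := fun s v => if s < τinv v then (cfun σ τinv v) ^ 2 else 0 with hφ
  have hφbd : ∀ s v, v ∈ Set.Icc (0:ℝ) 1 → |φ s v| ≤ σ ^ 4 := by
    intro s v hv
    simp only [hφ]
    split
    · rw [abs_of_nonneg (sq_nonneg _)]
      nlinarith [hc_le v hv, hc_nonneg v hv]
    · simpa using by positivity
  have hPsi_eq : ∀ s : ℝ, ∀ u ∈ Set.Icc (0:ℝ) 1,
      Psi σ τinv s u = ∫ v in Set.Icc (0:ℝ) u, φ s v := by
    intro s u hu
    have h1 : ∀ v, (if v ≤ u ∧ s < τinv v then (cfun σ τinv v) ^ 2 else 0)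
        = (Set.Iic u).indicator (φ s) v := by
      intro v
      simp only [Set.indicator, Set.mem_Iic, hφ]
      rw [ite_and]
    have h2 : Set.Icc (0:ℝ) 1 ∩ Set.Iic u = Set.Icc (0:ℝ) u := by
      ext x
      simp only [Set.mem_inter_iff, Set.mem_Icc, Set.mem_Iic]
      constructor
      · rintro ⟨⟨h0, _⟩, h3⟩; exact ⟨h0, h3⟩
      · rintro ⟨h0, h3⟩; exact ⟨⟨h0, h3.trans hu.2⟩, h3⟩
    calc Psi σ τinv s u
        = ∫ v in Set.Icc (0:ℝ) 1, (Set.Iic u).indicator (φ s) v := by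
          unfold Psi; simp_rw [h1]
      _ = ∫ v in Set.Icc (0:ℝ) 1 ∩ Set.Iic u, φ s v := setIntegral_indicator measurableSet_Iic
      _ = ∫ v in Set.Icc (0:ℝ) u, φ s v := by rw [h2]
  have hprod : ∀ s u, u ≤ s → ∀ v, gker σ τinv s v * gker σ τinv u v = φ s v := by
    intro s u hus v
    rw [gker_eq, gker_eq]
    simp only [hφ]
    by_cases h : s < τinv v
    · rw [if_pos h, if_pos (lt_of_le_of_lt hus h), if_pos h]; ring
    · rw [if_neg h, zero_mul, if_neg h]
  have stepA : ∀ s ∈ Set.Icc (0:ℝ) 1, ∀ u ∈ Set.Icc (0:ℝ) s,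
      (∫ v in Set.Icc (0:ℝ) u, gker σ τinv s v * gker σ τinv u v) = Psi σ τinv s u := by
    intro s hs u hu
    rw [hPsi_eq s u ⟨hu.1, hu.2.trans hs.2⟩]
    exact setIntegral_congr_fun measurableSet_Icc (fun v _ => hprod s u hu.2 v)
  have hvolicc : ∀ a b : ℝ, volume (Set.Icc a b) < ⊤ := by
    intro a b; rw [Real.volume_Icc]; exact ENNReal.ofReal_lt_top
  have hint1 : ∀ s ∈ Set.Icc (0:ℝ) 1,
      IntegrableOn (fun u => gker σ τinv s u) (Set.Icc (0:ℝ) s) := by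
    intro s hs
    refine bdd_meas_integrableOn measurableSet_Icc (hvolicc 0 s)
      hgm.of_uncurry_left.aestronglyMeasurable (M := σ ^ 2) ?_
    intro u hu
    exact hgbd s u ⟨hu.1, hu.2.trans hs.2⟩
  have hint2 : ∀ s ∈ Set.Icc (0:ℝ) 1,
      IntegrableOn (fun u => Psi σ τinv s u) (Set.Icc (0:ℝ) s) := by
    intro s hs
    refine bdd_meas_integrableOn measurableSet_Icc (hvolicc 0 s)
      ((hPsim.comp_measurable (measurable_const.prodMk measurable_id)).aestronglyMeasurable)
      (M := σ ^ 4) ?_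
    intro u _
    exact hPsibd s u
  have stepB : ∀ s ∈ Set.Icc (0:ℝ) 1,
      (∫ u in Set.Icc (0:ℝ) s, (σ ^ 2 / (1 + σ ^ 2)) *
          (gker σ τinv s u - ∫ v in Set.Icc (0:ℝ) u, gker σ τinv s v * gker σ τinv u v))
        = (σ ^ 2 / (1 + σ ^ 2)) * (∫ u in Set.Icc (0:ℝ) s, gker σ τinv s u)
          - (σ ^ 2 / (1 + σ ^ 2)) * (∫ u in Set.Icc (0:ℝ) s, Psi σ τinv s u) := by
    intro s hs
    have h1 : (∫ u in Set.Icc (0:ℝ) s, (σ ^ 2 / (1 + σ ^ 2)) *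
          (gker σ τinv s u - ∫ v in Set.Icc (0:ℝ) u, gker σ τinv s v * gker σ τinv u v))
        = ∫ u in Set.Icc (0:ℝ) s, (σ ^ 2 / (1 + σ ^ 2)) *
          (gker σ τinv s u - Psi σ τinv s u) :=
      setIntegral_congr_fun measurableSet_Icc (fun u hu => by rw [stepA s hs u hu])
    rw [h1, integral_const_mul, integral_sub (hint1 s hs) (hint2 s hs), mul_sub]
  have hX : IntegrableOn (fun s => ∫ u in Set.Icc (0:ℝ) s, gker σ τinv s u)
      (Set.Icc (0:ℝ) 1) :=
    inner_integrable zero_le_one _ hgm (M := σ ^ 2) (fun s _ u hu => hgbd s u hu)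
  have hY : IntegrableOn (fun s => ∫ u in Set.Icc (0:ℝ) s, Psi σ τinv s u)
      (Set.Icc (0:ℝ) 1) :=
    inner_integrable zero_le_one _ hPsim.measurable (M := σ ^ 4) (fun s _ u _ => hPsibd s u)
  have hIco : ∀ u ∈ Set.Icc (0:ℝ) 1,
      Set.Icc u 1 ∩ Set.Iio (τinv u) = Set.Ico u (τinv u) := by
    intro u hu
    ext x
    simp only [Set.mem_inter_iff, Set.mem_Icc, Set.mem_Iio, Set.mem_Ico]
    constructor
    · rintro ⟨⟨h1, _⟩, h2⟩; exact ⟨h1, h2⟩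
    · rintro ⟨h1, h2⟩; exact ⟨⟨h1, h2.le.trans (hτ2 u hu)⟩, h2⟩
  have hT1 : (∫ s in Set.Icc (0:ℝ) 1, ∫ u in Set.Icc (0:ℝ) s, gker σ τinv s u)
      = ∫ u in Set.Icc (0:ℝ) 1, -cfun σ τinv u * (τinv u - u) := by
    rw [tri_swap zero_le_one _ hgm (fun s _ u hu => hgbd s u hu)]
    refine setIntegral_congr_fun measurableSet_Icc ?_
    intro u hu
    have h1 : ∀ s, gker σ τinv s u
        = (Set.Iio (τinv u)).indicator (fun _ => -cfun σ τinv u) s := by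
      intro s
      rw [gker_eq]
      simp only [Set.indicator, Set.mem_Iio]
    calc ∫ s in Set.Icc u 1, gker σ τinv s u
        = ∫ s in Set.Icc u 1, (Set.Iio (τinv u)).indicator (fun _ => -cfun σ τinv u) s := by
          simp_rw [h1]
      _ = ∫ _ in Set.Icc u 1 ∩ Set.Iio (τinv u), (-cfun σ τinv u) :=
          setIntegral_indicator measurableSet_Iio
      _ = (volume (Set.Ico u (τinv u))).toReal • (-cfun σ τinv u) := by
          rw [hIco u hu, setIntegral_const]; rfl
      _ = -cfun σ τinv u * (τinv u - u) := by
          rw [Real.volume_Ico, ENNReal.toReal_ofReal (sub_nonneg.mpr (hτ1 u)), smul_eq_mul]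
          ring
  have hYval : ∀ s ∈ Set.Icc (0:ℝ) 1,
      (∫ u in Set.Icc (0:ℝ) s, Psi σ τinv s u)
        = ∫ v in Set.Icc (0:ℝ) s, (s - v) * φ s v := by
    intro s hs
    have h1 : (∫ u in Set.Icc (0:ℝ) s, Psi σ τinv s u)
        = ∫ u in Set.Icc (0:ℝ) s, ∫ v in Set.Icc (0:ℝ) u, φ s v :=
      setIntegral_congr_fun measurableSet_Icc
        (fun u hu => hPsi_eq s u ⟨hu.1, hu.2.trans hs.2⟩)
    have hFm : Measurable (Function.uncurry (fun (_ : ℝ) (v : ℝ) => φ s v)) := by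
      refine Measurable.ite ?_ ((hcm.comp measurable_snd).pow_const 2) measurable_const
      exact measurableSet_lt measurable_const (hτm.comp measurable_snd)
    have hswap := tri_swap hs.1 (fun (_ : ℝ) (v : ℝ) => φ s v) hFm (M := σ ^ 4)
      (fun u _ v hv => hφbd s v ⟨hv.1, hv.2.trans hs.2⟩)
    rw [h1, hswap]
    refine setIntegral_congr_fun measurableSet_Icc ?_
    intro v hv
    show (∫ _ in Set.Icc v s, φ s v) = (s - v) * φ s v
    rw [setIntegral_const, Measure.real, Real.volume_Icc, ENNReal.toReal_ofReal (sub_nonneg.mpr hv.2),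
      smul_eq_mul]
  have hHm : Measurable (Function.uncurry (fun (s : ℝ) (v : ℝ) => (s - v) * φ s v)) := by
    refine (measurable_fst.sub measurable_snd).mul ?_
    refine Measurable.ite ?_ ((hcm.comp measurable_snd).pow_const 2) measurable_const
    exact measurableSet_lt measurable_fst (hτm.comp measurable_snd)
  have hHbd : ∀ s ∈ Set.Icc (0:ℝ) 1, ∀ v ∈ Set.Icc (0:ℝ) 1,
      |(s - v) * φ s v| ≤ σ ^ 4 := by
    intro s hs v hv
    rw [abs_mul]
    have h1 : |s - v| ≤ 1 := by
      rw [abs_sub_le_iff]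
      constructor <;> linarith [hs.1, hs.2, hv.1, hv.2]
    calc |s - v| * |φ s v| ≤ 1 * (σ ^ 4) :=
        mul_le_mul h1 (hφbd s v hv) (abs_nonneg _) zero_le_one
      _ = σ ^ 4 := one_mul _
  have hT2 : (∫ s in Set.Icc (0:ℝ) 1, ∫ u in Set.Icc (0:ℝ) s, Psi σ τinv s u)
      = ∫ v in Set.Icc (0:ℝ) 1, (cfun σ τinv v) ^ 2 * ((τinv v - v) ^ 2 / 2) := by
    rw [setIntegral_congr_fun measurableSet_Icc hYval,
      tri_swap zero_le_one (fun (s : ℝ) (v : ℝ) => (s - v) * φ s v) hHm hHbd]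
    refine setIntegral_congr_fun measurableSet_Icc ?_
    intro v hv
    have h1 : ∀ s, (s - v) * φ s v
        = (Set.Iio (τinv v)).indicator (fun s => (s - v) * (cfun σ τinv v) ^ 2) s := by
      intro s
      simp only [hφ, Set.indicator, Set.mem_Iio, mul_ite, mul_zero]
    calc ∫ s in Set.Icc v 1, (s - v) * φ s v
        = ∫ s in Set.Icc v 1 ∩ Set.Iio (τinv v), (s - v) * (cfun σ τinv v) ^ 2 := by
          simp_rw [h1]; exact setIntegral_indicator measurableSet_Iio
      _ = ∫ s in Set.Ico v (τinv v), (s - v) * (cfun σ τinv v) ^ 2 := by rw [hIco v hv]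
      _ = ∫ s in Set.Ioo v (τinv v), (s - v) * (cfun σ τinv v) ^ 2 :=
          integral_Ico_eq_integral_Ioo
      _ = ∫ s in Set.Ioc v (τinv v), (s - v) * (cfun σ τinv v) ^ 2 :=
          integral_Ioc_eq_integral_Ioo.symm
      _ = ∫ s in v..(τinv v), (s - v) * (cfun σ τinv v) ^ 2 :=
          (intervalIntegral.integral_of_le (hτ1 v)).symm
      _ = (∫ s in v..(τinv v), (s - v)) * (cfun σ τinv v) ^ 2 :=
          intervalIntegral.integral_mul_const _ _
      _ = (cfun σ τinv v) ^ 2 * ((τinv v - v) ^ 2 / 2) := by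
          have h2 := intervalIntegral.integral_comp_sub_right
            (a := v) (b := τinv v) (fun x => x) v
          rw [h2, sub_self, integral_id]
          ring
  have houter : (∫ s in Set.Icc (0:ℝ) 1, ∫ u in Set.Icc (0:ℝ) s,
        (σ ^ 2 / (1 + σ ^ 2)) *
          (gker σ τinv s u - ∫ v in Set.Icc (0:ℝ) u, gker σ τinv s v * gker σ τinv u v))
      = ∫ s in Set.Icc (0:ℝ) 1,
          ((σ ^ 2 / (1 + σ ^ 2)) * (∫ u in Set.Icc (0:ℝ) s, gker σ τinv s u)
            - (σ ^ 2 / (1 + σ ^ 2)) * (∫ u in Set.Icc (0:ℝ) s, Psi σ τinv s u)) :=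
    setIntegral_congr_fun measurableSet_Icc stepB
  rw [houter, integral_sub (hX.const_mul _) (hY.const_mul _), integral_const_mul,
    integral_const_mul, hT1, hT2]
  have e1 : (σ ^ 2 / (1 + σ ^ 2)) *
        (∫ u in Set.Icc (0:ℝ) 1, -cfun σ τinv u * (τinv u - u))
      = -(∫ u in Set.Icc (0:ℝ) 1,
          σ ^ 4 * (τinv u - u) / ((1 + σ ^ 2) * (1 + σ ^ 2 * (1 + u - τinv u)))) := by
    rw [← integral_const_mul, ← integral_neg]
    refine setIntegral_congr_fun measurableSet_Icc ?_
    intro u hu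
    have hD : (1 + σ ^ 2 * (1 + u - τinv u)) ≠ 0 := by linarith [hden u hu]
    have hK : (1 + σ ^ 2) ≠ 0 := by positivity
    unfold cfun
    field_simp
  have e2 : (σ ^ 2 / (1 + σ ^ 2)) *
        (∫ v in Set.Icc (0:ℝ) 1, (cfun σ τinv v) ^ 2 * ((τinv v - v) ^ 2 / 2))
      = (1 / 2) * (σ ^ 2 / (1 + σ ^ 2)) *
        (∫ v in Set.Icc (0:ℝ) 1,
          (σ ^ 2 * (τinv v - v) / (1 + σ ^ 2 * (1 + v - τinv v))) ^ 2) := by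
    rw [← integral_const_mul, ← integral_const_mul]
    refine setIntegral_congr_fun measurableSet_Icc ?_
    intro v hv
    unfold cfun
    ring
  rw [e1, e2]
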